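/- Let τ lie in the complex upper half-plane and let Δ₁, Δ₂, Δ₃ ∈ ℂ. Define g(u) := ∑_{a=1}^{3} [θ₁′(u + Δ_a;τ)/θ₁(u + Δ_a;τ) + θ₁′(−u + Δ_a;τ)/θ₁(−u + Δ_a;τ)] and, for I = 2, 3, 4, S_I := ∑_{a=1}^{3} θ_I′(Δ_a;τ)/θ_I(Δ_a;τ). Assume θ₁(v + Δ_a;τ) ≠ 0 for every a and every v ∈ {1/2, −1/2, τ/2, −τ/2, (τ−1)/2, −(τ−1)/2}, and θ_I(Δ_a;τ) ≠ 0 for all I ∈ {2,3,4} and all a. Then [g(1/2) + 2g(τ/2)]·[g(1/2) + 2g((τ−1)/2)] − [g(1/2) − g(τ/2)]·[g(1/2) − g((τ−1)/2)] = 12·(S₂S₃ + S₂S₄ + S₃S₄). (This is the Jacobian determinant of the SU(3) elliptic Bethe Ansatz equations evaluated at the exact non-standard solution (u₂₁, u₃₁) = (1/2, τ/2).) -/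

import Mathlib

noncomputable def θ₁ (u τ : ℂ) : ℂ :=
  -Complex.I * Complex.exp (Real.pi * Complex.I * τ / 4 + Real.pi * Complex.I * u) *
    jacobiTheta₂ (u + (1 + τ) / 2) τ

noncomputable def θ₂ (u τ : ℂ) : ℂ :=
  Complex.exp (Real.pi * Complex.I * τ / 4 + Real.pi * Complex.I * u) *
    jacobiTheta₂ (u + τ / 2) τ

noncomputable def θ₃ (u τ : ℂ) : ℂ := jacobiTheta₂ u τ

noncomputable def θ₄ (u τ : ℂ) : ℂ := jacobiTheta₂ (u + 1 / 2) τ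

noncomputable def θ₁' (u τ : ℂ) : ℂ := deriv (fun v => θ₁ v τ) u

noncomputable def θ₂' (u τ : ℂ) : ℂ := deriv (fun v => θ₂ v τ) u

noncomputable def θ₃' (u τ : ℂ) : ℂ := deriv (fun v => θ₃ v τ) u

noncomputable def θ₄' (u τ : ℂ) : ℂ := deriv (fun v => θ₄ v τ) u

open Complex Real

private lemma hasDerivAt_J (τ : ℂ) (hτ : 0 < τ.im) (s u : ℂ) :
    HasDerivAt (fun v : ℂ => jacobiTheta₂ (v + s) τ) (jacobiTheta₂' (u + s) τ) u := by
  simpa [Function.comp_def] using (hasDerivAt_jacobiTheta₂_fst (u + s) hτ).comp u ((hasDerivAt_id u).add_const s)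

private lemma hasDerivAt_E (τ u : ℂ) :
    HasDerivAt (fun v : ℂ => cexp ((π:ℂ)*I*τ/4 + (π:ℂ)*I*v))
      ((π:ℂ)*I * cexp ((π:ℂ)*I*τ/4 + (π:ℂ)*I*u)) u := by
  have h : HasDerivAt (fun v : ℂ => (π:ℂ)*I*τ/4 + (π:ℂ)*I*v) ((π:ℂ)*I) u := by
    simpa using ((hasDerivAt_id u).const_mul ((π:ℂ)*I)).const_add ((π:ℂ)*I*τ/4)
  simpa [mul_comm] using h.cexp

private lemma log1 (τ : ℂ) (hτ : 0 < τ.im) (u : ℂ) (h : θ₁ u τ ≠ 0) :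
    θ₁' u τ / θ₁ u τ = (π:ℂ)*I +
      jacobiTheta₂' (u + (1 + τ)/2) τ / jacobiTheta₂ (u + (1 + τ)/2) τ := by
  have hJ : jacobiTheta₂ (u + (1 + τ)/2) τ ≠ 0 := fun hz => h (by simp [θ₁, hz])
  have hE : cexp ((π:ℂ)*I*τ/4 + (π:ℂ)*I*u) ≠ 0 := Complex.exp_ne_zero _
  have hd : HasDerivAt (fun v => θ₁ v τ)
      ((-I * ((π:ℂ)*I * cexp ((π:ℂ)*I*τ/4 + (π:ℂ)*I*u))) * jacobiTheta₂ (u + (1+τ)/2) τ +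
        (-I * cexp ((π:ℂ)*I*τ/4 + (π:ℂ)*I*u)) * jacobiTheta₂' (u + (1+τ)/2) τ) u := by
    simpa [θ₁, Pi.mul_def] using ((hasDerivAt_E τ u).const_mul (-I)).mul (hasDerivAt_J τ hτ ((1+τ)/2) u)
  rw [θ₁', hd.deriv]
  simp only [θ₁] at *
  set A := jacobiTheta₂ (u + (1 + τ)/2) τ
  set B := jacobiTheta₂' (u + (1 + τ)/2) τ
  set E := cexp ((π:ℂ)*I*τ/4 + (π:ℂ)*I*u)
  field_simp
  ring

private lemma log2 (τ : ℂ) (hτ : 0 < τ.im) (u : ℂ) (h : θ₂ u τ ≠ 0) :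
    θ₂' u τ / θ₂ u τ = (π:ℂ)*I +
      jacobiTheta₂' (u + τ/2) τ / jacobiTheta₂ (u + τ/2) τ := by
  have hJ : jacobiTheta₂ (u + τ/2) τ ≠ 0 := fun hz => h (by simp [θ₂, hz])
  have hE : cexp ((π:ℂ)*I*τ/4 + (π:ℂ)*I*u) ≠ 0 := Complex.exp_ne_zero _
  have hd : HasDerivAt (fun v => θ₂ v τ)
      (((π:ℂ)*I * cexp ((π:ℂ)*I*τ/4 + (π:ℂ)*I*u)) * jacobiTheta₂ (u + τ/2) τ +
        cexp ((π:ℂ)*I*τ/4 + (π:ℂ)*I*u) * jacobiTheta₂' (u + τ/2) τ) u := by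
    simpa [θ₂, Pi.mul_def] using (hasDerivAt_E τ u).mul (hasDerivAt_J τ hτ (τ/2) u)
  rw [θ₂', hd.deriv]
  simp only [θ₂] at *
  set A := jacobiTheta₂ (u + τ/2) τ
  set B := jacobiTheta₂' (u + τ/2) τ
  set E := cexp ((π:ℂ)*I*τ/4 + (π:ℂ)*I*u)
  field_simp

private lemma log3 (τ : ℂ) (hτ : 0 < τ.im) (u : ℂ) :
    θ₃' u τ / θ₃ u τ = jacobiTheta₂' u τ / jacobiTheta₂ u τ := by
  have hd : HasDerivAt (fun v => θ₃ v τ) (jacobiTheta₂' u τ) u :=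
    hasDerivAt_jacobiTheta₂_fst u hτ
  rw [θ₃', hd.deriv, θ₃]

private lemma log4 (τ : ℂ) (hτ : 0 < τ.im) (u : ℂ) :
    θ₄' u τ / θ₄ u τ = jacobiTheta₂' (u + 1/2) τ / jacobiTheta₂ (u + 1/2) τ := by
  have hd : HasDerivAt (fun v => θ₄ v τ) (jacobiTheta₂' (u + 1/2) τ) u :=
    hasDerivAt_J τ hτ (1/2) u
  rw [θ₄', hd.deriv, θ₄]

private lemma ratio_add_tau (τ z : ℂ) (h : jacobiTheta₂ z τ ≠ 0) :
    jacobiTheta₂' (z + τ) τ / jacobiTheta₂ (z + τ) τ =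
      jacobiTheta₂' z τ / jacobiTheta₂ z τ - 2*(π:ℂ)*I := by
  rw [jacobiTheta₂_add_left', jacobiTheta₂'_add_left']
  have hE : cexp (-(π:ℂ) * I * (τ + 2 * z)) ≠ 0 := Complex.exp_ne_zero _
  field_simp

private lemma mem6 (τ v : ℂ) (h : v = 1/2 ∨ v = -(1/2) ∨ v = τ/2 ∨ v = -(τ/2) ∨ v = (τ-1)/2 ∨ v = -((τ-1)/2)) :
    v ∈ ({1 / 2, -(1 / 2), τ / 2, -(τ / 2), (τ - 1) / 2, -((τ - 1) / 2)} : Set ℂ) := by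
  simp only [Set.mem_insert_iff, Set.mem_singleton_iff]; exact h

theorem SU3_jacobian_at_nonstandard_solution (τ : ℂ) (hτ : 0 < τ.im) (Δ : Fin 3 → ℂ)
    (g : ℂ → ℂ)
    (hg : g = fun u => ∑ a, (θ₁' (u + Δ a) τ / θ₁ (u + Δ a) τ +
      θ₁' (-u + Δ a) τ / θ₁ (-u + Δ a) τ))
    (S₂ S₃ S₄ : ℂ)
    (hS₂ : S₂ = ∑ a, θ₂' (Δ a) τ / θ₂ (Δ a) τ)
    (hS₃ : S₃ = ∑ a, θ₃' (Δ a) τ / θ₃ (Δ a) τ)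
    (hS₄ : S₄ = ∑ a, θ₄' (Δ a) τ / θ₄ (Δ a) τ)
    (hne : ∀ a, ∀ v ∈ ({1 / 2, -(1 / 2), τ / 2, -(τ / 2), (τ - 1) / 2,
      -((τ - 1) / 2)} : Set ℂ), θ₁ (v + Δ a) τ ≠ 0)
    (h2 : ∀ a, θ₂ (Δ a) τ ≠ 0) (h3 : ∀ a, θ₃ (Δ a) τ ≠ 0) (h4 : ∀ a, θ₄ (Δ a) τ ≠ 0) :
    (g (1 / 2) + 2 * g (τ / 2)) * (g (1 / 2) + 2 * g ((τ - 1) / 2)) -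
      (g (1 / 2) - g (τ / 2)) * (g (1 / 2) - g ((τ - 1) / 2)) =
      12 * (S₂ * S₃ + S₂ * S₄ + S₃ * S₄) := by
  have key2 : ∀ a, θ₁' ((1:ℂ)/2 + Δ a) τ / θ₁ ((1:ℂ)/2 + Δ a) τ +
      θ₁' (-(1/2) + Δ a) τ / θ₁ (-(1/2) + Δ a) τ = 2 * (θ₂' (Δ a) τ / θ₂ (Δ a) τ) := by
    intro a
    rw [log1 τ hτ _ (hne a _ (mem6 τ _ (Or.inl rfl))), log1 τ hτ _ (hne a _ (mem6 τ _ (Or.inr (Or.inl rfl)))),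
      log2 τ hτ _ (h2 a)]
    have e1 : (1:ℂ)/2 + Δ a + (1 + τ)/2 = (Δ a + τ/2) + 1 := by ring
    have e2 : -((1:ℂ)/2) + Δ a + (1 + τ)/2 = Δ a + τ/2 := by ring
    rw [e1, e2, jacobiTheta₂_add_left, jacobiTheta₂'_add_left]
    ring
  have key4 : ∀ a, θ₁' (τ/2 + Δ a) τ / θ₁ (τ/2 + Δ a) τ +
      θ₁' (-(τ/2) + Δ a) τ / θ₁ (-(τ/2) + Δ a) τ = 2 * (θ₄' (Δ a) τ / θ₄ (Δ a) τ) := by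
    intro a
    have hJ : jacobiTheta₂ (Δ a + 1/2) τ ≠ 0 := by
      have := h4 a; simpa [θ₄] using this
    rw [log1 τ hτ _ (hne a _ (mem6 τ _ (Or.inr (Or.inr (Or.inl rfl))))), log1 τ hτ _ (hne a _ (mem6 τ _ (Or.inr (Or.inr (Or.inr (Or.inl rfl)))))),
      log4 τ hτ _]
    have e1 : τ/2 + Δ a + (1 + τ)/2 = (Δ a + 1/2) + τ := by ring
    have e2 : -(τ/2) + Δ a + (1 + τ)/2 = Δ a + 1/2 := by ring
    rw [e1, e2, ratio_add_tau τ _ hJ]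
    ring
  have key3 : ∀ a, θ₁' ((τ-1)/2 + Δ a) τ / θ₁ ((τ-1)/2 + Δ a) τ +
      θ₁' (-((τ-1)/2) + Δ a) τ / θ₁ (-((τ-1)/2) + Δ a) τ =
      2 * (θ₃' (Δ a) τ / θ₃ (Δ a) τ) := by
    intro a
    have hJ : jacobiTheta₂ (Δ a) τ ≠ 0 := by
      have := h3 a; simpa [θ₃] using this
    rw [log1 τ hτ _ (hne a _ (mem6 τ _ (Or.inr (Or.inr (Or.inr (Or.inr (Or.inl rfl))))))), log1 τ hτ _ (hne a _ (mem6 τ _ (Or.inr (Or.inr (Or.inr (Or.inr (Or.inr rfl))))))),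
      log3 τ hτ _]
    have e1 : (τ-1)/2 + Δ a + (1 + τ)/2 = Δ a + τ := by ring
    have e2 : -((τ-1)/2) + Δ a + (1 + τ)/2 = Δ a + 1 := by ring
    rw [e1, e2, ratio_add_tau τ _ hJ, jacobiTheta₂_add_left, jacobiTheta₂'_add_left]
    ring
  have G2 : g ((1:ℂ)/2) = 2 * S₂ := by
    rw [hg, hS₂, Finset.mul_sum]
    exact Finset.sum_congr rfl fun a _ => key2 a
  have G4 : g (τ/2) = 2 * S₄ := by
    rw [hg, hS₄, Finset.mul_sum]
    exact Finset.sum_congr rfl fun a _ => key4 a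
  have G3 : g ((τ-1)/2) = 2 * S₃ := by
    rw [hg, hS₃, Finset.mul_sum]
    exact Finset.sum_congr rfl fun a _ => key3 a
  rw [G2, G4, G3]
  ring
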